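/- Let G be a 3-uniform hypergraph on n vertices such that no 3 edges of G span at most 5 vertices (i.e., G contains no subgraph with 5 vertices and 3 edges). Then the number of edges of G is at most n(n-1)/5, and in particular at most n²/5. -/

import Mathlib

open Finset

/-- Upper bound: an `F⁽³⁾(5,3)`-free 3-uniform hypergraph on `n` vertices has at most
`n(n-1)/5` edges, in particular at most `n²/5` edges. -/
theorem stmt_1 (n : ℕ) (G : Finset (Finset (Fin n)))
    (h3 : ∀ e ∈ G, e.card = 3)
    (hfree : ∀ e₁ ∈ G, ∀ e₂ ∈ G, ∀ e₃ ∈ G,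
      e₁ ≠ e₂ → e₁ ≠ e₃ → e₂ ≠ e₃ → 5 < (e₁ ∪ e₂ ∪ e₃).card) :
    5 * G.card ≤ n * (n - 1) ∧ 5 * G.card ≤ n ^ 2 := by
  classical
  -- codegree of a pair
  set d : Finset (Fin n) → ℕ := fun p => (G.filter (fun e => p ⊆ e)).card with hd
  -- set of covered pairs
  set P : Finset (Finset (Fin n)) :=
    ((univ : Finset (Fin n)).powersetCard 2).filter (fun p => ∃ e ∈ G, p ⊆ e) with hP
  -- every pair has codegree at most 2
  have hdle : ∀ p : Finset (Fin n), p.card = 2 → d p ≤ 2 := by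
    intro p hp
    by_contra hlt
    push_neg at hlt
    obtain ⟨e₁, e₂, e₃, he₁, he₂, he₃, h12, h13, h23⟩ :=
      Finset.two_lt_card_iff.mp hlt
    simp only [Finset.mem_filter] at he₁ he₂ he₃
    have hb : 5 < (e₁ ∪ e₂ ∪ e₃).card := hfree _ he₁.1 _ he₂.1 _ he₃.1 h12 h13 h23
    have hsub : e₁ ∪ e₂ ∪ e₃ ⊆ p ∪ (e₁ \ p) ∪ (e₂ \ p) ∪ (e₃ \ p) := by
      intro x hx
      simp only [Finset.mem_union, Finset.mem_sdiff] at hx ⊢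
      by_cases hxp : x ∈ p <;> tauto
    have hc : ∀ e, e ∈ G → p ⊆ e → (e \ p).card = 1 := by
      intro e he hpe
      rw [Finset.card_sdiff_of_subset hpe, h3 e he, hp]
    have h55 : (5:ℕ) < 5 :=
      calc (5:ℕ) < (e₁ ∪ e₂ ∪ e₃).card := hb
      _ ≤ (p ∪ (e₁ \ p) ∪ (e₂ \ p) ∪ (e₃ \ p)).card := Finset.card_le_card hsub
      _ ≤ (p ∪ (e₁ \ p) ∪ (e₂ \ p)).card + (e₃ \ p).card := Finset.card_union_le _ _
      _ ≤ (p ∪ (e₁ \ p)).card + (e₂ \ p).card + (e₃ \ p).card := by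
          gcongr; exact Finset.card_union_le _ _
      _ ≤ p.card + (e₁ \ p).card + (e₂ \ p).card + (e₃ \ p).card := by
          gcongr; exact Finset.card_union_le _ _
      _ ≤ 5 := by
          rw [hp, hc e₁ he₁.1 he₁.2, hc e₂ he₂.1 he₂.2, hc e₃ he₃.1 he₃.2]
    exact absurd h55 (lt_irrefl 5)
  -- each edge contains at most one pair of codegree ≥ 2
  have honep : ∀ e ∈ G, ((e.powersetCard 2).filter (fun p => 2 ≤ d p)).card ≤ 1 := by
    intro e he
    rw [Finset.card_le_one]
    intro p₁ hp₁ p₂ hp₂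
    by_contra hne
    simp only [Finset.mem_filter, Finset.mem_powersetCard] at hp₁ hp₂
    obtain ⟨⟨hp₁e, hp₁c⟩, hd₁⟩ := hp₁
    obtain ⟨⟨hp₂e, hp₂c⟩, hd₂⟩ := hp₂
    -- get a second edge through each pair
    have get : ∀ p, p ⊆ e → 2 ≤ d p → ∃ f ∈ G, p ⊆ f ∧ f ≠ e := by
      intro p hpe hdp
      have hemem : e ∈ G.filter (fun f => p ⊆ f) := Finset.mem_filter.mpr ⟨he, hpe⟩
      have hdp' : 2 ≤ (G.filter (fun f => p ⊆ f)).card := hdp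
      obtain ⟨f, hf, hfe⟩ := Finset.exists_mem_ne
        (s := G.filter (fun f => p ⊆ f)) (by omega) e
      simp only [Finset.mem_filter] at hf
      exact ⟨f, hf.1, hf.2, hfe⟩
    obtain ⟨f₁, hf₁G, hpf₁, hf₁e⟩ := get p₁ hp₁e hd₁
    obtain ⟨f₂, hf₂G, hpf₂, hf₂e⟩ := get p₂ hp₂e hd₂
    by_cases hff : f₁ = f₂
    · -- then p₁ ∪ p₂ = e ⊆ f₁, contradiction
      subst hff
      have hu3 : 3 ≤ (p₁ ∪ p₂).card := by
        by_contra hle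
        push_neg at hle
        have h1 : p₁ = p₁ ∪ p₂ :=
          Finset.eq_of_subset_of_card_le Finset.subset_union_left (by rw [hp₁c]; omega)
        have h2 : p₂ = p₁ ∪ p₂ :=
          Finset.eq_of_subset_of_card_le Finset.subset_union_right (by rw [hp₂c]; omega)
        exact hne (h1.trans h2.symm)
      have hue : p₁ ∪ p₂ = e :=
        Finset.eq_of_subset_of_card_le (Finset.union_subset hp₁e hp₂e)
          (by rw [h3 e he]; omega)
      have : e ⊆ f₁ := hue ▸ Finset.union_subset hpf₁ hpf₂
      exact hf₁e (Finset.eq_of_subset_of_card_le this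
        (by rw [h3 e he, h3 f₁ hf₁G])).symm
    · -- three distinct edges spanning ≤ 5 vertices
      have hb : 5 < (e ∪ f₁ ∪ f₂).card :=
        hfree _ he _ hf₁G _ hf₂G (Ne.symm hf₁e) (Ne.symm hf₂e) hff
      have hsub : e ∪ f₁ ∪ f₂ ⊆ e ∪ (f₁ \ e) ∪ (f₂ \ e) := by
        intro x hx
        simp only [Finset.mem_union, Finset.mem_sdiff] at hx ⊢
        by_cases hxe : x ∈ e <;> tauto
      have hc : ∀ f p, f ∈ G → p ⊆ f → p ⊆ e → p.card = 2 → (f \ e).card ≤ 1 := by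
        intro f p hfG hpf hpe hpc
        have h1 : f \ e ⊆ f \ p := Finset.sdiff_subset_sdiff (le_refl _) hpe
        have h2 : (f \ p).card = 1 := by
          rw [Finset.card_sdiff_of_subset hpf, h3 f hfG, hpc]
        calc (f \ e).card ≤ (f \ p).card := Finset.card_le_card h1
          _ = 1 := h2
      have := Finset.card_union_le (e ∪ (f₁ \ e)) (f₂ \ e)
      have := Finset.card_union_le e (f₁ \ e)
      have h5 : (e ∪ f₁ ∪ f₂).card ≤ 5 := by
        calc (e ∪ f₁ ∪ f₂).card ≤ (e ∪ (f₁ \ e) ∪ (f₂ \ e)).card :=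
              Finset.card_le_card hsub
          _ ≤ (e ∪ (f₁ \ e)).card + (f₂ \ e).card := Finset.card_union_le _ _
          _ ≤ e.card + (f₁ \ e).card + (f₂ \ e).card := by omega
          _ ≤ 3 + 1 + 1 := by
              gcongr
              · exact le_of_eq (h3 e he)
              · exact hc f₁ p₁ hf₁G hpf₁ hp₁e hp₁c
              · exact hc f₂ p₂ hf₂G hpf₂ hp₂e hp₂c
      omega
  -- double counting lemma
  have swap : ∀ Q : Finset (Finset (Fin n)),
      ∑ e ∈ G, (Q.filter (fun p => p ⊆ e)).card = ∑ p ∈ Q, d p := by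
    intro Q
    simp only [hd, Finset.card_filter]
    exact Finset.sum_comm
  -- pairs within an edge
  have hPe : ∀ e ∈ G, P.filter (fun p => p ⊆ e) = e.powersetCard 2 := by
    intro e he
    ext p
    simp only [hP, Finset.mem_filter, Finset.mem_powersetCard]
    constructor
    · rintro ⟨⟨⟨-, hc⟩, -⟩, hpe⟩
      exact ⟨hpe, hc⟩
    · rintro ⟨hpe, hc⟩
      exact ⟨⟨⟨Finset.subset_univ p, hc⟩, e, he, hpe⟩, hpe⟩
  have hcard3 : ∀ e ∈ G, (e.powersetCard 2).card = 3 := by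
    intro e he
    rw [Finset.card_powersetCard, h3 e he]
    rfl
  -- total count: 3|G| = ∑ d p over P
  have htotal : 3 * G.card = ∑ p ∈ P, d p := by
    rw [← swap P]
    rw [Finset.sum_congr rfl fun e he => by rw [hPe e he, hcard3 e he]]
    rw [Finset.sum_const, smul_eq_mul, mul_comm]
  -- pairs of codegree exactly 1
  set P1 : Finset (Finset (Fin n)) := P.filter (fun p => d p = 1) with hP1
  have hP1card : ∑ p ∈ P1, d p = P1.card := by
    rw [Finset.sum_congr rfl fun p hp => (Finset.mem_filter.mp hp).2]
    simp
    rfl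
  -- every pair in P has codegree ≥ 1 and ≤ 2
  have hd1 : ∀ p ∈ P, 1 ≤ d p ∧ d p ≤ 2 := by
    intro p hp
    simp only [hP, Finset.mem_filter, Finset.mem_powersetCard] at hp
    obtain ⟨⟨-, hc⟩, e, he, hpe⟩ := hp
    refine ⟨?_, hdle p hc⟩
    have : e ∈ G.filter (fun f => p ⊆ f) := Finset.mem_filter.mpr ⟨he, hpe⟩
    exact Finset.card_pos.mpr ⟨e, this⟩
  -- each edge has at least 2 pairs of codegree 1
  have hper : ∀ e ∈ G, 2 ≤ (P1.filter (fun p => p ⊆ e)).card := by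
    intro e he
    have heq : P1.filter (fun p => p ⊆ e) = (e.powersetCard 2).filter (fun p => d p = 1) := by
      ext p
      simp only [hP1, hP, Finset.mem_filter, Finset.mem_powersetCard]
      constructor
      · rintro ⟨⟨⟨⟨-, hc⟩, -⟩, hdp⟩, hpe⟩
        exact ⟨⟨hpe, hc⟩, hdp⟩
      · rintro ⟨⟨hpe, hc⟩, hdp⟩
        exact ⟨⟨⟨⟨Finset.subset_univ p, hc⟩, e, he, hpe⟩, hdp⟩, hpe⟩
    rw [heq]
    have hsplit := Finset.card_filter_add_card_filter_not
      (s := e.powersetCard 2) (p := fun p => d p = 1)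
    have hsub : (e.powersetCard 2).filter (fun p => ¬ d p = 1)
        ⊆ (e.powersetCard 2).filter (fun p => 2 ≤ d p) := by
      intro p hp
      simp only [Finset.mem_filter, Finset.mem_powersetCard] at hp ⊢
      refine ⟨hp.1, ?_⟩
      have h1 : 1 ≤ d p := by
        have : e ∈ G.filter (fun f => p ⊆ f) := Finset.mem_filter.mpr ⟨he, hp.1.1⟩
        exact Finset.card_pos.mpr ⟨e, this⟩
      omega
    have := Finset.card_le_card hsub
    have := honep e he
    have := hcard3 e he
    omega
  -- |P1| ≥ 2|G|
  have hP1ge : 2 * G.card ≤ P1.card := by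
    rw [← hP1card, ← swap P1]
    calc 2 * G.card = ∑ _e ∈ G, 2 := by rw [Finset.sum_const, smul_eq_mul, mul_comm]
      _ ≤ ∑ e ∈ G, (P1.filter (fun p => p ⊆ e)).card :=
          Finset.sum_le_sum hper
  -- ∑ d over P ≤ 2|P| - |P1|
  have hsum_le : ∑ p ∈ P, d p + P1.card ≤ 2 * P.card := by
    have hsplit : ∑ p ∈ P, d p
        = ∑ p ∈ P1, d p + ∑ p ∈ P.filter (fun p => ¬ d p = 1), d p := by
      rw [hP1]
      exact (Finset.sum_filter_add_sum_filter_not P _ _).symm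
    have h1 : ∑ p ∈ P.filter (fun p => ¬ d p = 1), d p
        ≤ 2 * (P.filter (fun p => ¬ d p = 1)).card := by
      calc ∑ p ∈ P.filter (fun p => ¬ d p = 1), d p
          ≤ ∑ _p ∈ P.filter (fun p => ¬ d p = 1), 2 := by
            apply Finset.sum_le_sum
            intro p hp
            exact (hd1 p (Finset.mem_filter.mp hp).1).2
        _ = (P.filter (fun p => ¬ d p = 1)).card * 2 := by
            rw [Finset.sum_const, smul_eq_mul]
        _ = 2 * (P.filter (fun p => ¬ d p = 1)).card := mul_comm _ _
    have hsplit2 := Finset.card_filter_add_card_filter_not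
      (s := P) (p := fun p => d p = 1)
    rw [hsplit, hP1card]
    rw [hP1] at *
    omega
  -- 5|G| ≤ 2|P|
  have hmain : 5 * G.card ≤ 2 * P.card := by
    have := htotal
    omega
  -- |P| ≤ C(n,2)
  have hPle : P.card ≤ n.choose 2 := by
    calc P.card ≤ ((univ : Finset (Fin n)).powersetCard 2).card :=
          Finset.card_le_card (Finset.filter_subset _ _)
      _ = n.choose 2 := by rw [Finset.card_powersetCard, Finset.card_univ, Fintype.card_fin]
  have hchoose : 2 * n.choose 2 = n * (n - 1) := by
    rw [Nat.choose_two_right]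
    have hdvd : 2 ∣ n * (n - 1) := by
      rcases n with _ | m
      · simp
      · simp only [Nat.succ_sub_one]
        rcases Nat.even_or_odd m with h | h
        · exact Dvd.dvd.mul_left h.two_dvd _
        · have : Even (m + 1) := Odd.add_one h
          exact Dvd.dvd.mul_right this.two_dvd _
    exact Nat.mul_div_cancel' hdvd
  have hfin : 5 * G.card ≤ n * (n - 1) := by
    calc 5 * G.card ≤ 2 * P.card := hmain
      _ ≤ 2 * n.choose 2 := by omega
      _ = n * (n - 1) := hchoose
  refine ⟨hfin, hfin.trans ?_⟩
  calc n * (n - 1) ≤ n * n := Nat.mul_le_mul_left n (Nat.sub_le n 1)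
    _ = n ^ 2 := (sq n).symm
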